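/- For every integer n ≥ 2, the unique real root λ > 1 of p_n(x) = x^{2n} - 2(x + x^2 + ... + x^{2n-1}) + 1 is a Salem number, i.e., all other complex roots of p_n have absolute value at most 1 and at least one root lies on the unit circle. -/

import Mathlib

open Polynomial Real


noncomputable def gg (m : ℕ) (w : ℝ) : ℝ :=
  Real.sin ((2*m+5)*w) - 3 * Real.sin ((2*m+3)*w)

lemma gg_cont (m : ℕ) : Continuous (gg m) := by
  unfold gg; fun_prop

lemma gg_w (m k : ℕ) : gg m ((k*π)/(2*m+3)) = (-1)^k * Real.sin (2*k*π/(2*m+3)) := by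
  have hd : (2*(m:ℝ)+3) ≠ 0 := by positivity
  have h1 : (2*(m:ℝ)+5)*((k*π)/(2*m+3)) = 2*k*π/(2*m+3) + k*π := by field_simp; ring
  have h2 : (2*(m:ℝ)+3)*((k*π)/(2*m+3)) = k*π := by field_simp
  rw [gg, h1, h2, Real.sin_add_nat_mul_pi, Real.sin_nat_mul_pi, mul_zero, sub_zero]

lemma gg_half (m : ℕ) : gg m (π/2) = 4 * (-1)^m := by
  have h1 : (2*(m:ℝ)+5)*(π/2) = π/2 + ((m+2:ℕ):ℝ)*π := by push_cast; ring
  have h2 : (2*(m:ℝ)+3)*(π/2) = -(π/2) + ((m+2:ℕ):ℝ)*π := by push_cast; ring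
  rw [gg, h1, h2, Real.sin_add_nat_mul_pi, Real.sin_add_nat_mul_pi]
  simp [pow_add]
  ring

noncomputable def aa (m : ℕ) (j : ℕ) : ℝ :=
  if j ≤ m then ((j:ℝ)+1)*π/(2*m+3) else if j = m+1 then π/2 else (j:ℝ)*π/(2*m+3)

lemma aa_of_le {m j : ℕ} (h : j ≤ m) : aa m j = ((j:ℝ)+1)*π/(2*m+3) := if_pos h

lemma aa_mid (m : ℕ) : aa m (m+1) = π/2 := by
  unfold aa; rw [if_neg (by omega), if_pos rfl]

lemma aa_of_ge {m j : ℕ} (h : m+2 ≤ j) : aa m j = (j:ℝ)*π/(2*m+3) := by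
  unfold aa; rw [if_neg (by omega), if_neg (by omega)]

lemma aa_pos (m j : ℕ) : 0 < aa m j := by
  unfold aa
  split_ifs with h1 h2
  · positivity
  · positivity
  · have hj : 0 < j := by omega
    have : (0:ℝ) < (j:ℝ) := by exact_mod_cast hj
    positivity

lemma aa_lt_pi (m : ℕ) {j : ℕ} (hj : j ≤ 2*m+2) : aa m j < π := by
  have hd : (0:ℝ) < 2*(m:ℝ)+3 := by positivity
  have hpi := pi_pos
  unfold aa
  split_ifs with h1 h2
  · rw [div_lt_iff₀ hd]
    have : (j:ℝ) ≤ (m:ℝ) := by exact_mod_cast h1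
    nlinarith
  · linarith
  · rw [div_lt_iff₀ hd]
    have : (j:ℝ) ≤ 2*(m:ℝ)+2 := by exact_mod_cast hj
    nlinarith

lemma aa_le_half {m j : ℕ} (h : j ≤ m+1) : aa m j ≤ π/2 := by
  have hd : (0:ℝ) < 2*(m:ℝ)+3 := by positivity
  have hpi := pi_pos
  rcases Nat.lt_or_ge j (m+1) with h' | h'
  · rw [aa_of_le (by omega), div_le_iff₀ hd]
    have : (j:ℝ) ≤ (m:ℝ) := by exact_mod_cast Nat.lt_succ_iff.mp h'
    nlinarith
  · have : j = m+1 := le_antisymm h h'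
    rw [this, aa_mid]

lemma half_le_aa {m j : ℕ} (h : m+1 ≤ j) : π/2 ≤ aa m j := by
  have hd : (0:ℝ) < 2*(m:ℝ)+3 := by positivity
  have hpi := pi_pos
  rcases Nat.lt_or_ge j (m+2) with h' | h'
  · have : j = m+1 := by omega
    rw [this, aa_mid]
  · rw [aa_of_ge h', le_div_iff₀ hd]
    have : ((m:ℝ))+2 ≤ (j:ℝ) := by exact_mod_cast h'
    nlinarith

lemma aa_mono (m : ℕ) {j j' : ℕ} (h : j ≤ j') : aa m j ≤ aa m j' := by
  have hpi := pi_pos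
  have hd : (0:ℝ) < 2*(m:ℝ)+3 := by positivity
  rcases Nat.lt_or_ge j' (m+1) with h1 | h1
  · have hj : j ≤ m := by omega
    rw [aa_of_le hj, aa_of_le (by omega)]
    have : (j:ℝ) ≤ (j':ℝ) := by exact_mod_cast h
    gcongr
  · rcases Nat.lt_or_ge j (m+2) with h2 | h2
    · exact le_trans (aa_le_half (by omega)) (half_le_aa h1)
    · rw [aa_of_ge h2, aa_of_ge (by omega)]
      have : (j:ℝ) ≤ (j':ℝ) := by exact_mod_cast h
      gcongr

lemma neg_one_sq' (k : ℕ) : ((-1:ℝ))^k * (-1:ℝ)^k = 1 := by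
  rw [← pow_add]
  exact Even.neg_one_pow ⟨k, by ring⟩

lemma gg_sign (m : ℕ) {j : ℕ} (hj : j ≤ 2*m+2) : 0 < (-1:ℝ)^(j+1) * gg m (aa m j) := by
  have hpi := pi_pos
  have hd : (0:ℝ) < 2*(m:ℝ)+3 := by positivity
  rcases Nat.lt_or_ge j (m+1) with h1 | h1
  · -- j ≤ m
    have hj' : j ≤ m := by omega
    have e : aa m j = (((j+1:ℕ)):ℝ)*π/(2*(m:ℝ)+3) := by rw [aa_of_le hj']; push_cast; ring
    rw [e, gg_w m (j+1)]
    have hs : 0 < Real.sin (2*((j+1:ℕ):ℝ)*π/(2*(m:ℝ)+3)) := by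
      apply Real.sin_pos_of_pos_of_lt_pi
      · have : (0:ℝ) < ((j+1:ℕ):ℝ) := by exact_mod_cast Nat.succ_pos j
        positivity
      · rw [div_lt_iff₀ hd]
        have : ((j+1:ℕ):ℝ) ≤ (m:ℝ)+1 := by exact_mod_cast (by omega : j+1 ≤ m+1)
        nlinarith
    calc (0:ℝ) < Real.sin (2*((j+1:ℕ):ℝ)*π/(2*(m:ℝ)+3)) := hs
      _ = (-1:ℝ)^(j+1) * ((-1)^(j+1) * Real.sin (2*((j+1:ℕ):ℝ)*π/(2*(m:ℝ)+3))) := by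
          rw [← mul_assoc, neg_one_sq', one_mul]
  · rcases Nat.lt_or_ge j (m+2) with h2 | h2
    · -- j = m+1
      have : j = m+1 := by omega
      subst this
      rw [aa_mid, gg_half]
      have : (-1:ℝ)^(m+1+1) * (4*(-1:ℝ)^m) = 4 := by
        rw [pow_add, pow_add]
        rw [show ((-1:ℝ))^m * (-1:ℝ)^1 * (-1:ℝ)^1 * (4*(-1:ℝ)^m) = 4*((-1:ℝ)^m*(-1:ℝ)^m) by ring,
          neg_one_sq', mul_one]
      rw [this]
      norm_num
    · -- m+2 ≤ j ≤ 2m+2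
      have e : aa m j = ((j:ℕ):ℝ)*π/(2*(m:ℝ)+3) := aa_of_ge h2
      rw [e, gg_w m j]
      have hs : Real.sin (2*((j:ℕ):ℝ)*π/(2*(m:ℝ)+3)) < 0 := by
        set x := 2*((j:ℕ):ℝ)*π/(2*(m:ℝ)+3) with hx
        have hlo : π < x := by
          rw [hx, lt_div_iff₀ hd]
          have : ((m:ℝ))+2 ≤ (j:ℝ) := by exact_mod_cast h2
          nlinarith
        have hhi : x < 2*π := by
          rw [hx, div_lt_iff₀ hd]
          have : (j:ℝ) ≤ 2*(m:ℝ)+2 := by exact_mod_cast hj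
          nlinarith
        have : Real.sin (x - 2*π) < 0 :=
          Real.sin_neg_of_neg_of_neg_pi_lt (by linarith) (by linarith)
        rwa [Real.sin_sub_two_pi] at this
      have key : (-1:ℝ)^(j+1) * ((-1)^j * Real.sin (2*((j:ℕ):ℝ)*π/(2*(m:ℝ)+3)))
          = - Real.sin (2*((j:ℕ):ℝ)*π/(2*(m:ℝ)+3)) := by
        rw [pow_add, show ((-1:ℝ))^j * (-1:ℝ)^1 * ((-1:ℝ)^j * Real.sin (2*((j:ℕ):ℝ)*π/(2*(m:ℝ)+3)))
          = -( ((-1:ℝ)^j * (-1:ℝ)^j) * Real.sin (2*((j:ℕ):ℝ)*π/(2*(m:ℝ)+3))) by ring, neg_one_sq',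
          one_mul]
      rw [key]
      linarith

lemma gg_exists_zero (m : ℕ) {k : ℕ} (hk1 : 1 ≤ k) (hk2 : k ≤ 2*m+2) :
    ∃ w, aa m (k-1) < w ∧ w < aa m k ∧ gg m w = 0 := by
  have huv : aa m (k-1) ≤ aa m k := aa_mono m (by omega)
  have hcont : ContinuousOn (gg m) (Set.Icc (aa m (k-1)) (aa m k)) :=
    (gg_cont m).continuousOn
  have su := gg_sign m (show k-1 ≤ 2*m+2 by omega)
  have sv := gg_sign m hk2
  rw [show k-1+1 = k by omega] at su
  rcases Nat.even_or_odd k with he | ho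
  · have hsu : 0 < gg m (aa m (k-1)) := by rwa [he.neg_one_pow, one_mul] at su
    have hsv : gg m (aa m k) < 0 := by
      rw [(he.add_one).neg_one_pow] at sv; linarith
    obtain ⟨w, hw, hww⟩ := intermediate_value_Ioo' huv hcont (Set.mem_Ioo.mpr ⟨hsv, hsu⟩)
    exact ⟨w, hw.1, hw.2, hww⟩
  · have hsu : gg m (aa m (k-1)) < 0 := by rw [ho.neg_one_pow] at su; linarith
    have hsv : 0 < gg m (aa m k) := by
      have : Even (k+1) := Odd.add_one ho
      rwa [this.neg_one_pow, one_mul] at sv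
    obtain ⟨w, hw, hww⟩ := intermediate_value_Ioo huv hcont (Set.mem_Ioo.mpr ⟨hsu, hsv⟩)
    exact ⟨w, hw.1, hw.2, hww⟩



noncomputable def Qf (m : ℕ) (z : ℂ) : ℂ := z^(2*m+5) - 3*z^(2*m+4) + 3*z - 1

lemma Q_exp (m : ℕ) (w : ℝ) :
    Qf m (Complex.exp ((2*w : ℝ) * Complex.I)) =
      Complex.exp (((2*m+5 : ℕ) * w : ℝ) * Complex.I) * (2*Complex.I) * (gg m w : ℂ) := by
  set E := Complex.exp ((w:ℂ) * Complex.I) with hEdef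
  have hE : E ≠ 0 := Complex.exp_ne_zero _
  have hpow : ∀ k : ℕ, Complex.exp (((k * w : ℝ)) * Complex.I) = E ^ k := by
    intro k
    rw [hEdef, ← Complex.exp_nat_mul]
    push_cast
    ring_nf
  have hsin : ∀ k : ℕ, Complex.sin (((k * w : ℝ)):ℂ) = ((E^k)⁻¹ - E^k) * Complex.I / 2 := by
    intro k
    rw [Complex.sin, show -(((k*w:ℝ)):ℂ) * Complex.I = -((((k*w:ℝ)):ℂ)*Complex.I) by ring,
      Complex.exp_neg, hpow]
  have e1 : (2*(m:ℝ)+5)*w = ((2*m+5:ℕ):ℝ)*w := by push_cast; ring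
  have e2 : (2*(m:ℝ)+3)*w = ((2*m+3:ℕ):ℝ)*w := by push_cast; ring
  have hgg : (gg m w : ℂ) = (((E^(2*m+5))⁻¹ - E^(2*m+5)) * Complex.I / 2)
      - 3 * (((E^(2*m+3))⁻¹ - E^(2*m+3)) * Complex.I / 2) := by
    rw [gg, e1, e2, Complex.ofReal_sub, Complex.ofReal_mul, Complex.ofReal_sin,
      Complex.ofReal_sin, hsin, hsin]
    norm_num
  rw [hgg, hpow, show ((2*w : ℝ):ℂ) * Complex.I = ((((2:ℕ)*w:ℝ)):ℂ) * Complex.I by norm_num,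
    hpow, Qf]
  have hI2 : Complex.I^2 = -1 := Complex.I_sq
  field_simp
  ring_nf
  rw [hI2]
  ring



noncomputable def Pp (m : ℕ) : ℤ[X] := X ^ (2*m+4) - 2 * ∑ j ∈ Finset.Icc 1 (2*m+3), X ^ j + 1

lemma aeval_Pp {A : Type*} [CommRing A] (m : ℕ) (z : A) :
    aeval z (Pp m) = z^(2*m+4) - 2 * ∑ j ∈ Finset.Icc 1 (2*m+3), z ^ j + 1 := by
  simp [Pp, map_ofNat]

lemma sum_mul' (m : ℕ) (z : ℂ) :
    (z - 1) * ∑ j ∈ Finset.Icc 1 (2*m+3), z ^ j = z^(2*m+4) - z := by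
  have h : ∑ j ∈ Finset.Icc 1 (2*m+3), z ^ j = z * ∑ j ∈ Finset.range (2*m+3), z ^ j := by
    rw [Finset.mul_sum]
    rw [show Finset.Icc 1 (2*m+3) = Finset.Ico 1 (2*m+4) by rfl]
    rw [Finset.sum_Ico_eq_sum_range]
    simp [pow_succ, mul_comm, pow_add]
  rw [h, mul_comm (z-1), mul_assoc, geom_sum_mul]
  ring

lemma key (m : ℕ) (z : ℂ) : (z - 1) * aeval z (Pp m) = Qf m z := by
  rw [aeval_Pp, Qf]
  linear_combination -2 * sum_mul' m z



lemma exp_ne_one {w : ℝ} (h0 : 0 < w) (h1 : w < π) :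
    Complex.exp ((2*w:ℝ) * Complex.I) ≠ 1 := by
  intro h
  obtain ⟨k, hk⟩ := Complex.exp_eq_one_iff.mp h
  have him := congrArg Complex.im hk
  simp [Complex.mul_im] at him
  have hpi := pi_pos
  rcases le_or_gt 1 k with hk1 | hk1
  · have : (1:ℝ) ≤ (k:ℝ) := by exact_mod_cast hk1
    nlinarith
  · have : (k:ℝ) ≤ 0 := by exact_mod_cast (by omega : k ≤ 0)
    nlinarith

lemma exp_ne_exp {w w' : ℝ} (h0 : 0 < w) (h1 : w < w') (h2 : w' < π) :
    Complex.exp ((2*w:ℝ) * Complex.I) ≠ Complex.exp ((2*w':ℝ) * Complex.I) := by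
  intro h
  obtain ⟨k, hk⟩ := Complex.exp_eq_exp_iff_exists_int.mp h
  have him := congrArg Complex.im hk
  simp [Complex.mul_im, Complex.add_im] at him
  have hpi := pi_pos
  rcases le_or_gt 0 k with hk1 | hk1
  · have : (0:ℝ) ≤ (k:ℝ) := by exact_mod_cast hk1
    nlinarith
  · have : (k:ℝ) ≤ -1 := by exact_mod_cast (by omega : k ≤ -1)
    nlinarith

lemma Pp_natDegree_le (m : ℕ) : ((Pp m).map (algebraMap ℤ ℂ)).natDegree ≤ 2*m+4 := by
  refine le_trans (natDegree_map_le) ?_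
  rw [Pp]
  refine le_trans (natDegree_add_le _ _) ?_
  simp only [natDegree_one]
  refine max_le (le_trans (natDegree_sub_le _ _) ?_) (by omega)
  refine max_le (by simp) ?_
  refine le_trans (natDegree_mul_le) ?_
  have : (∑ j ∈ Finset.Icc 1 (2*m+3), (X:ℤ[X]) ^ j).natDegree ≤ 2*m+3 := by
    refine natDegree_sum_le_of_forall_le _ _ fun j hj => ?_
    simp only [natDegree_X_pow]
    exact (Finset.mem_Icc.mp hj).2
  have h2 : ((2:ℤ[X])).natDegree = 0 := by norm_num
  omega

lemma Pp_map_ne_zero (m : ℕ) : (Pp m).map (algebraMap ℤ ℂ) ≠ 0 := by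
  intro h
  have : eval 0 ((Pp m).map (algebraMap ℤ ℂ)) = 1 := by
    rw [eval_map, ← aeval_def]
    have : aeval (0:ℂ) (Pp m) = 0^(2*m+4) - 2 * ∑ j ∈ Finset.Icc 1 (2*m+3), (0:ℂ) ^ j + 1 := by
      simp [Pp, map_ofNat]
    rw [this, Finset.sum_eq_zero fun j hj => zero_pow (by have := (Finset.mem_Icc.mp hj).1; omega)]
    norm_num
  rw [h] at this
  simp at this

theorem salem (n : ℕ) (hn : 2 ≤ n) (lam : ℝ) (hlam : 1 < lam)
    (hroot : aeval lam ((X ^ (2 * n) - 2 * ∑ j ∈ Finset.Icc 1 (2 * n - 1), X ^ j + 1 : ℤ[X])) = 0) :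
    (∀ z : ℂ, aeval z ((X ^ (2 * n) - 2 * ∑ j ∈ Finset.Icc 1 (2 * n - 1), X ^ j + 1 : ℤ[X])) = 0 →
        z ≠ (lam : ℂ) → ‖z‖ ≤ 1) ∧
      ∃ z : ℂ, aeval z ((X ^ (2 * n) - 2 * ∑ j ∈ Finset.Icc 1 (2 * n - 1), X ^ j + 1 : ℤ[X])) = 0 ∧
        ‖z‖ = 1 := by
  obtain ⟨m, rfl⟩ : ∃ m, n = m + 2 := ⟨n - 2, by omega⟩
  have e2 : 2*(m+2)-1 = 2*m+3 := by omega
  have e1 : 2*(m+2) = 2*m+4 := by ring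
  rw [e2, e1] at hroot ⊢
  have hPp : (X ^ (2*m+4) - 2 * ∑ j ∈ Finset.Icc 1 (2*m+3), X ^ j + 1 : ℤ[X]) = Pp m := rfl
  rw [hPp] at hroot ⊢
  set Pc := (Pp m).map (algebraMap ℤ ℂ) with hPcdef
  have hevalPc : ∀ z : ℂ, Pc.eval z = aeval z (Pp m) := fun z => by
    rw [hPcdef, eval_map, ← aeval_def]
  -- transfer the real root to ℂ
  have hlamC : aeval ((lam:ℂ)) (Pp m) = 0 := by
    have h0 := congrArg (algebraMap ℝ ℂ) hroot
    rw [map_zero, ← aeval_algebraMap_apply] at h0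
    simpa using h0
  have hlampos : (0:ℝ) < lam := by linarith
  have hlamne0 : (lam:ℂ) ≠ 0 := by
    simp only [ne_eq, Complex.ofReal_eq_zero]
    linarith
  have kqlam : Qf m (lam:ℂ) = 0 := by rw [← key m, hlamC, mul_zero]
  have hQinv : Qf m ((lam:ℂ)⁻¹) = 0 := by
    have hident : ((lam:ℂ))^(2*m+5) * Qf m ((lam:ℂ)⁻¹) = - Qf m (lam:ℂ) := by
      have hp : ∀ k : ℕ, (lam:ℂ)^k * ((lam:ℂ)⁻¹)^k = 1 := fun k => by
        rw [← mul_pow, mul_inv_cancel₀ hlamne0, one_pow]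
      simp only [Qf]
      linear_combination hp (2*m+5) - 3*(lam:ℂ)*hp (2*m+4) + 3*(lam:ℂ)^(2*m+4)*hp 1
    rw [kqlam, neg_zero] at hident
    exact (mul_eq_zero.mp hident).resolve_left (pow_ne_zero _ hlamne0)
  have hinvne1 : ((lam:ℂ)⁻¹) ≠ 1 := by
    rw [ne_eq, inv_eq_one]
    intro h
    have : lam = 1 := by exact_mod_cast h
    linarith
  have hinvroot : aeval ((lam:ℂ)⁻¹) (Pp m) = 0 := by
    have hk := key m ((lam:ℂ)⁻¹)
    rw [hQinv] at hk
    rcases mul_eq_zero.mp hk with h | h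
    · exact absurd (sub_eq_zero.mp h) hinvne1
    · exact h
  -- choose the circle roots
  have hex : ∀ k : ℕ, ∃ w : ℝ, 1 ≤ k → k ≤ 2*m+2 →
      (aa m (k-1) < w ∧ w < aa m k ∧ gg m w = 0) := by
    intro k
    by_cases h : 1 ≤ k ∧ k ≤ 2*m+2
    · obtain ⟨w, hw⟩ := gg_exists_zero m h.1 h.2
      exact ⟨w, fun _ _ => hw⟩
    · exact ⟨0, fun a b => absurd ⟨a, b⟩ h⟩
  choose c hc using hex
  set F : ℕ → ℂ := fun k => Complex.exp ((2 * c k : ℝ) * Complex.I) with hF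
  have hcpos : ∀ k, 1 ≤ k → k ≤ 2*m+2 → 0 < c k := fun k h1 h2 =>
    lt_trans (aa_pos m (k-1)) (hc k h1 h2).1
  have hclt : ∀ k, 1 ≤ k → k ≤ 2*m+2 → c k < π := fun k h1 h2 =>
    lt_trans (hc k h1 h2).2.1 (aa_lt_pi m h2)
  have hFroot : ∀ k, 1 ≤ k → k ≤ 2*m+2 → aeval (F k) (Pp m) = 0 := by
    intro k h1 h2
    have hQ : Qf m (F k) = 0 := by
      rw [hF]
      simp only []
      rw [Q_exp m (c k), (hc k h1 h2).2.2]
      simp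
    have hne1 : F k ≠ 1 := exp_ne_one (hcpos k h1 h2) (hclt k h1 h2)
    have hk := key m (F k)
    rw [hQ] at hk
    rcases mul_eq_zero.mp hk with h | h
    · exact absurd (sub_eq_zero.mp h) hne1
    · exact h
  have hFabs : ∀ k, ‖F k‖ = 1 := fun k => Complex.norm_exp_ofReal_mul_I _
  have hFinj : Set.InjOn F ((Finset.Icc 1 (2*m+2) : Finset ℕ) : Set ℕ) := by
    have hlt : ∀ a b : ℕ, 1 ≤ a → a ≤ 2*m+2 → 1 ≤ b → b ≤ 2*m+2 → a < b → F a ≠ F b := by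
      intro a b ha1 ha2 hb1 hb2 hab
      have h1 : c a < aa m a := (hc a ha1 ha2).2.1
      have h2 : aa m (b-1) < c b := (hc b hb1 hb2).1
      have h3 : aa m a ≤ aa m (b-1) := aa_mono m (by omega)
      exact exp_ne_exp (hcpos a ha1 ha2) (by linarith) (hclt b hb1 hb2)
    intro k hk k' hk' heq
    simp only [Finset.coe_Icc, Set.mem_Icc] at hk hk'
    by_contra hne
    rcases Nat.lt_or_ge k k' with h | h
    · exact hlt k k' hk.1 hk.2 hk'.1 hk'.2 h heq
    · exact hlt k' k hk'.1 hk'.2 hk.1 hk.2 (by omega) heq.symm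
  set T := Pc.roots.toFinset with hT
  have hmemT : ∀ z : ℂ, aeval z (Pp m) = 0 → z ∈ T := by
    intro z hz
    rw [hT, Multiset.mem_toFinset, Polynomial.mem_roots']
    refine ⟨Pp_map_ne_zero m, ?_⟩
    rw [IsRoot, hevalPc]
    exact hz
  set S : Finset ℂ := insert (lam:ℂ) (insert ((lam:ℂ)⁻¹) ((Finset.Icc 1 (2*m+2)).image F))
    with hS
  have habslam : ‖(lam:ℂ)‖ = lam := by
    rw [Complex.norm_real, Real.norm_eq_abs]; exact abs_of_pos hlampos
  have habsinv : ‖((lam:ℂ)⁻¹)‖ = lam⁻¹ := by rw [norm_inv, habslam]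
  have hinvlt1 : lam⁻¹ < 1 := by
    have h1 : lam⁻¹ * lam = 1 := inv_mul_cancel₀ (ne_of_gt hlampos)
    nlinarith
  have hnotmem1 : ((lam:ℂ)⁻¹) ∉ (Finset.Icc 1 (2*m+2)).image F := by
    intro hmem
    obtain ⟨k, hk, hFk⟩ := Finset.mem_image.mp hmem
    have h := congrArg norm hFk
    rw [hFabs, habsinv] at h
    linarith
  have hnotmem2 : (lam:ℂ) ∉ insert ((lam:ℂ)⁻¹) ((Finset.Icc 1 (2*m+2)).image F) := by
    intro hmem
    rcases Finset.mem_insert.mp hmem with h | h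
    · have h' := congrArg norm h
      rw [habslam, habsinv] at h'
      linarith
    · obtain ⟨k, hk, hFk⟩ := Finset.mem_image.mp h
      have h' := congrArg norm hFk
      rw [hFabs, habslam] at h'
      linarith
  have hcardS : S.card = 2*m+4 := by
    rw [hS, Finset.card_insert_of_notMem hnotmem2, Finset.card_insert_of_notMem hnotmem1,
      Finset.card_image_of_injOn hFinj, Nat.card_Icc]
    omega
  have hsub : S ⊆ T := by
    intro z hz
    rcases Finset.mem_insert.mp hz with h | h
    · exact h ▸ hmemT _ hlamC
    rcases Finset.mem_insert.mp h with h' | h'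
    · exact h' ▸ hmemT _ hinvroot
    · obtain ⟨k, hk, hFk⟩ := Finset.mem_image.mp h'
      have hk' := Finset.mem_Icc.mp hk
      exact hFk ▸ hmemT _ (hFroot k hk'.1 hk'.2)
  have hcardT : T.card ≤ 2*m+4 :=
    le_trans (Multiset.toFinset_card_le _) (le_trans Pc.card_roots' (Pp_natDegree_le m))
  have hSeqT : S = T := Finset.eq_of_subset_of_card_le hsub (by omega)
  constructor
  · intro z hz hzne
    have hzT : z ∈ T := hmemT z hz
    rw [← hSeqT] at hzT
    rcases Finset.mem_insert.mp hzT with h | h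
    · exact absurd h hzne
    rcases Finset.mem_insert.mp h with h' | h'
    · rw [h', habsinv]; linarith
    · obtain ⟨k, _, hFk⟩ := Finset.mem_image.mp h'
      rw [← hFk, hFabs]
  · exact ⟨F 1, hFroot 1 le_rfl (by omega), hFabs 1⟩
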